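/- Let p ≥ 1, c₂ > 0 and let c₁ be a constant with c₁ · √c₂ ≥ 4p, and let N ≥ 1 be an integer with N ≤ n / log(n). Then P( | n^{−1} Σ_{i=1}^n Σ_{ℓ=0}^{N−1} Σ_{k∈ℤ} ( ψ_{ℓ,k}(X_i) − E[ψ_{ℓ,k}(X_i)] ) | > c₁ · √(V_{2,ψ}(n, N)) ) ≤ 2 n^{−p}, where V_{2,ψ}(n, N) = c₂ · log(n) · (2A + 1)² · Φ₀² · 4^{N} / n. -/

import Mathlib

set_option maxHeartbeats 1000000

open MeasureTheory ProbabilityTheory Real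
open scoped ENNReal NNReal

/-- The dilated-translated function `ψ_{ℓ,k}(x) = 2^{ℓ/2} ψ(2^ℓ x - k)`. -/
noncomputable def waveletDil (ψ : ℝ → ℝ) (l : ℕ) (k : ℤ) (x : ℝ) : ℝ :=
  (2 : ℝ) ^ ((l : ℝ) / 2) * ψ ((2 : ℝ) ^ l * x - (k : ℝ))


lemma exp_le_one_add_add_sq {x : ℝ} (hx : |x| ≤ 1) : Real.exp x ≤ 1 + x + x ^ 2 := by
  have h := Real.exp_bound hx (n := 2) (by norm_num)
  have h2 : ∑ m ∈ Finset.range 2, x ^ m / (m.factorial : ℝ) = 1 + x := by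
    simp [Finset.sum_range_succ]
  rw [h2] at h
  have h3 : (((2:ℕ).succ : ℝ) / (((2:ℕ).factorial : ℝ) * (2:ℕ))) = 3 / 4 := by
    norm_num [Nat.factorial]
  rw [h3] at h
  have := (abs_le.mp h).2
  have hx2 : |x| ^ 2 = x ^ 2 := sq_abs x
  nlinarith [sq_nonneg x]

lemma integrable_of_bounded' {Ω : Type*} [MeasurableSpace Ω] {P : Measure Ω} [IsFiniteMeasure P]
    {g : Ω → ℝ} (hg : Measurable g) {C : ℝ} (hb : ∀ ω, |g ω| ≤ C) : Integrable g P :=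
  ⟨hg.aestronglyMeasurable, HasFiniteIntegral.of_bounded (C := C) (Filter.Eventually.of_forall hb)⟩

/-- mgf bound for a bounded centered rv. -/
lemma mgf_le_of_bounded {Ω : Type*} [MeasurableSpace Ω] (P : Measure Ω) [IsProbabilityMeasure P]
    {Y : Ω → ℝ} (hY : Measurable Y) {M : ℝ} (hM : 0 ≤ M) (hbdd : ∀ ω, |Y ω| ≤ M)
    (hmean : ∫ ω, Y ω ∂P = 0) {lam : ℝ} (hlam0 : 0 ≤ lam) (hlamM : lam * M ≤ 1) :
    mgf Y P lam ≤ Real.exp (lam ^ 2 * M ^ 2) := by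
  have hint1 : Integrable Y P := integrable_of_bounded' hY hbdd
  have hint2 : Integrable (fun ω => (Y ω) ^ 2) P := by
    refine integrable_of_bounded' (hY.pow_const 2) (C := M ^ 2) fun ω => ?_
    rw [abs_pow]
    exact pow_le_pow_left₀ (abs_nonneg _) (hbdd ω) 2
  have hintexp : Integrable (fun ω => Real.exp (lam * Y ω)) P := by
    refine integrable_of_bounded' ((hY.const_mul lam).exp) (C := Real.exp (lam * M)) fun ω => ?_
    rw [abs_of_pos (Real.exp_pos _)]
    exact Real.exp_le_exp.mpr (mul_le_mul_of_nonneg_left ((abs_le.mp (hbdd ω)).2) hlam0)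
  have hptw : ∀ ω, Real.exp (lam * Y ω) ≤ 1 + lam * Y ω + (lam * Y ω) ^ 2 := by
    intro ω
    refine exp_le_one_add_add_sq ?_
    rw [abs_mul, abs_of_nonneg hlam0]
    calc lam * |Y ω| ≤ lam * M := mul_le_mul_of_nonneg_left (hbdd ω) hlam0
    _ ≤ 1 := hlamM
  have hmono : mgf Y P lam ≤ ∫ ω, (1 + lam * Y ω + (lam * Y ω) ^ 2) ∂P := by
    refine integral_mono hintexp ?_ hptw
    exact (integrable_const 1).add (hint1.const_mul lam) |>.add
      (by simpa [mul_pow] using (hint2.const_mul (lam ^ 2)))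
  have hcalc : ∫ ω, (1 + lam * Y ω + (lam * Y ω) ^ 2) ∂P = 1 + lam ^ 2 * ∫ ω, (Y ω) ^ 2 ∂P := by
    have e1 : ∀ ω, (1 : ℝ) + lam * Y ω + (lam * Y ω) ^ 2 = 1 + lam * Y ω + lam ^ 2 * (Y ω) ^ 2 := by
      intro ω; ring
    simp_rw [e1]
    have i1 : Integrable (fun ω => 1 + lam * Y ω) P := by
      exact (integrable_const 1).add (hint1.const_mul lam)
    have i2 : Integrable (fun ω => lam ^ 2 * (Y ω) ^ 2) P := hint2.const_mul _
    rw [integral_add i1 i2, integral_add (integrable_const 1) (hint1.const_mul lam),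
      MeasureTheory.integral_const_mul, MeasureTheory.integral_const_mul, hmean]
    simp
  have hY2 : ∫ ω, (Y ω) ^ 2 ∂P ≤ M ^ 2 := by
    calc ∫ ω, (Y ω) ^ 2 ∂P ≤ ∫ _ω, M ^ 2 ∂P := by
          refine integral_mono hint2 (integrable_const _) fun ω => ?_
          have := hbdd ω
          nlinarith [abs_nonneg (Y ω), neg_abs_le (Y ω), le_abs_self (Y ω)]
    _ = M ^ 2 := by simp
  calc mgf Y P lam ≤ 1 + lam ^ 2 * ∫ ω, (Y ω) ^ 2 ∂P := le_of_le_of_eq hmono hcalc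
  _ ≤ 1 + lam ^ 2 * M ^ 2 := by nlinarith [sq_nonneg lam]
  _ ≤ Real.exp (lam ^ 2 * M ^ 2) := by linarith [Real.add_one_le_exp (lam ^ 2 * M ^ 2)]

/-- One-sided Chernoff–Hoeffding bound. -/
lemma chernoff_one_sided {Ω : Type*} [MeasurableSpace Ω] (P : Measure Ω) [IsProbabilityMeasure P]
    {n : ℕ} {Y : Fin n → Ω → ℝ} (hind : iIndepFun Y P)
    (hmeas : ∀ i, Measurable (Y i)) {M : ℝ} (hM : 0 ≤ M)
    (hbdd : ∀ i ω, |Y i ω| ≤ M) (hmean : ∀ i, ∫ ω, Y i ω ∂P = 0)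
    {lam : ℝ} (hlam0 : 0 ≤ lam) (hlamM : lam * M ≤ 1) (ε : ℝ) :
    (P {ω | ε ≤ ∑ i, Y i ω}).toReal ≤ Real.exp (-lam * ε + n * (lam ^ 2 * M ^ 2)) := by
  have hSmeas : Measurable (∑ i, Y i) := by
    have : Measurable fun ω => ∑ i, Y i ω := Finset.measurable_sum _ fun i _ => hmeas i
    convert this using 1
    ext ω
    simp [Finset.sum_apply]
  have hSbdd : ∀ ω, |(∑ i, Y i) ω| ≤ n * M := by
    intro ω
    simp only [Finset.sum_apply]
    calc |∑ i, Y i ω| ≤ ∑ i, |Y i ω| := Finset.abs_sum_le_sum_abs _ _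
    _ ≤ ∑ _i : Fin n, M := Finset.sum_le_sum fun i _ => hbdd i ω
    _ = n * M := by simp [Finset.sum_const, nsmul_eq_mul]
  have hint : Integrable (fun ω => Real.exp (lam * (∑ i, Y i) ω)) P := by
    refine integrable_of_bounded' ((hSmeas.const_mul lam).exp) (C := Real.exp (lam * (n * M)))
      fun ω => ?_
    rw [abs_of_pos (Real.exp_pos _)]
    exact Real.exp_le_exp.mpr (mul_le_mul_of_nonneg_left
      (le_trans (le_abs_self _) (hSbdd ω)) hlam0)
  have h1 : (P {ω | ε ≤ ∑ i, Y i ω}).toReal ≤ Real.exp (-lam * ε) * mgf (∑ i, Y i) P lam := by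
    have := measure_ge_le_exp_mul_mgf (μ := P) (X := ∑ i, Y i) ε hlam0 hint
    simpa [measureReal_def] using this
  have h2 : mgf (∑ i, Y i) P lam ≤ Real.exp (lam ^ 2 * M ^ 2) ^ n := by
    rw [show (∑ i, Y i) = ∑ i ∈ Finset.univ, Y i from rfl, hind.mgf_sum hmeas]
    calc ∏ i : Fin n, mgf (Y i) P lam ≤ ∏ _i : Fin n, Real.exp (lam ^ 2 * M ^ 2) := by
          refine Finset.prod_le_prod (fun i _ => mgf_nonneg) fun i _ => ?_
          exact mgf_le_of_bounded P (hmeas i) hM (hbdd i) (hmean i) hlam0 hlamM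
    _ = Real.exp (lam ^ 2 * M ^ 2) ^ n := by simp
  calc (P {ω | ε ≤ ∑ i, Y i ω}).toReal ≤ Real.exp (-lam * ε) * Real.exp (lam ^ 2 * M ^ 2) ^ n := by
        refine h1.trans (mul_le_mul_of_nonneg_left h2 (Real.exp_pos _).le)
  _ = Real.exp (-lam * ε + n * (lam ^ 2 * M ^ 2)) := by
      rw [← Real.exp_nat_mul, ← Real.exp_add]

/-- Two-sided version. -/
lemma chernoff_two_sided {Ω : Type*} [MeasurableSpace Ω] (P : Measure Ω) [IsProbabilityMeasure P]
    {n : ℕ} {Y : Fin n → Ω → ℝ} (hind : iIndepFun Y P)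
    (hmeas : ∀ i, Measurable (Y i)) {M : ℝ} (hM : 0 ≤ M)
    (hbdd : ∀ i ω, |Y i ω| ≤ M) (hmean : ∀ i, ∫ ω, Y i ω ∂P = 0)
    {lam : ℝ} (hlam0 : 0 ≤ lam) (hlamM : lam * M ≤ 1) (ε : ℝ) :
    (P {ω | ε ≤ |∑ i, Y i ω|}).toReal ≤ 2 * Real.exp (-lam * ε + n * (lam ^ 2 * M ^ 2)) := by
  have hindn : iIndepFun (fun i => (fun x => -x) ∘ Y i) P :=
    hind.comp (fun _ => fun x : ℝ => -x) fun _ => measurable_neg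
  have h1 := chernoff_one_sided P hind hmeas hM hbdd hmean hlam0 hlamM ε
  have h2 := chernoff_one_sided P hindn (fun i => (hmeas i).neg)
      (M := M) hM (fun i ω => by simpa using hbdd i ω)
      (fun i => by simp only [Function.comp]; rw [integral_neg]; simp [hmean i])
      hlam0 hlamM ε
  have hsub : {ω | ε ≤ |∑ i, Y i ω|} ⊆
      {ω | ε ≤ ∑ i, Y i ω} ∪ {ω | ε ≤ ∑ i, ((fun x => -x) ∘ Y i) ω} := by
    intro ω hω
    simp only [Set.mem_setOf_eq] at hω
    rcases le_abs.mp hω with h | h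
    · exact Or.inl h
    · refine Or.inr ?_
      simp only [Set.mem_setOf_eq, Function.comp_apply, ← Finset.sum_neg_distrib]
      simpa using h
  have hm : (P {ω | ε ≤ |∑ i, Y i ω|}).toReal ≤
      (P {ω | ε ≤ ∑ i, Y i ω}).toReal + (P {ω | ε ≤ ∑ i, ((fun x => -x) ∘ Y i) ω}).toReal := by
    rw [← ENNReal.toReal_add (measure_ne_top _ _) (measure_ne_top _ _)]
    exact ENNReal.toReal_mono (by finiteness)
      ((measure_mono hsub).trans (measure_union_le _ _))
  linarith



section wav
variable {ψ : ℝ → ℝ} {A : ℕ} {Φ₀ : ℝ}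

lemma wav_meas (hψ : Measurable ψ) (l : ℕ) (k : ℤ) : Measurable (waveletDil ψ l k) := by
  unfold waveletDil
  exact (hψ.comp ((measurable_id.const_mul ((2:ℝ)^l)).sub_const (k:ℝ))).const_mul _

lemma wav_abs_le (hψ_bdd : ∀ y : ℝ, |ψ y| ≤ Φ₀) (l : ℕ) (k : ℤ) (x : ℝ) :
    |waveletDil ψ l k x| ≤ (2:ℝ) ^ ((l:ℝ)/2) * Φ₀ := by
  unfold waveletDil
  rw [abs_mul, abs_of_pos (Real.rpow_pos_of_pos two_pos _)]
  exact mul_le_mul_of_nonneg_left (hψ_bdd _) (Real.rpow_pos_of_pos two_pos _).le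

lemma wav_eq_zero (hψ_supp : ∀ y : ℝ, y ∉ Set.Icc (-(A : ℝ)) (A : ℝ) → ψ y = 0)
    {l : ℕ} {x : ℝ} {k : ℤ}
    (hk : k ∉ Finset.Icc (⌊(2:ℝ)^l * x⌋ - (A:ℤ)) (⌊(2:ℝ)^l * x⌋ + (A:ℤ))) :
    waveletDil ψ l k x = 0 := by
  set y := (2:ℝ)^l * x with hy
  have hfl : ((⌊y⌋ : ℝ)) ≤ y := Int.floor_le y
  have hfl2 : y < (⌊y⌋ : ℝ) + 1 := Int.lt_floor_add_one y
  simp only [Finset.mem_Icc, not_and_or, not_le] at hk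
  have hz : ψ (y - k) = 0 := by
    apply hψ_supp
    simp only [Set.mem_Icc, not_and_or, not_le]
    rcases hk with h | h
    · right
      have : (k:ℝ) ≤ (⌊y⌋:ℝ) - A - 1 := by
        have : k + 1 ≤ ⌊y⌋ - A := h
        exact_mod_cast by push_cast at this ⊢; linarith
      linarith
    · left
      have : (⌊y⌋:ℝ) + A + 1 ≤ (k:ℝ) := by
        have : ⌊y⌋ + A + 1 ≤ k := h
        exact_mod_cast by push_cast at this ⊢; linarith
      linarith
  unfold waveletDil
  rw [← hy, hz, mul_zero]

lemma wav_card : (Finset.Icc (⌊(2:ℝ)^l * x⌋ - (A:ℤ)) (⌊(2:ℝ)^l * x⌋ + (A:ℤ))).card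
    = 2 * A + 1 := by
  rw [Int.card_Icc]; omega

lemma wav_sum_abs_le (hψ_supp : ∀ y : ℝ, y ∉ Set.Icc (-(A : ℝ)) (A : ℝ) → ψ y = 0)
    (hψ_bdd : ∀ y : ℝ, |ψ y| ≤ Φ₀) (hΦ₀ : 0 ≤ Φ₀) (l : ℕ) (x : ℝ) (s : Finset ℤ) :
    ∑ k ∈ s, |waveletDil ψ l k x| ≤ (2*(A:ℝ)+1) * ((2:ℝ) ^ ((l:ℝ)/2) * Φ₀) := by
  set t := Finset.Icc (⌊(2:ℝ)^l * x⌋ - (A:ℤ)) (⌊(2:ℝ)^l * x⌋ + (A:ℤ)) with ht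
  have h1 : ∑ k ∈ s, |waveletDil ψ l k x| = ∑ k ∈ s ∩ t, |waveletDil ψ l k x| := by
    refine (Finset.sum_subset Finset.inter_subset_left ?_).symm
    intro k hks hknot
    rw [wav_eq_zero hψ_supp (fun hkt => hknot (Finset.mem_inter.mpr ⟨hks, hkt⟩)), abs_zero]
  rw [h1]
  calc ∑ k ∈ s ∩ t, |waveletDil ψ l k x| ≤ ∑ k ∈ t, |waveletDil ψ l k x| :=
        Finset.sum_le_sum_of_subset_of_nonneg Finset.inter_subset_right
          (fun k _ _ => abs_nonneg _)
  _ ≤ t.card • ((2:ℝ) ^ ((l:ℝ)/2) * Φ₀) :=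
        Finset.sum_le_card_nsmul _ _ _ (fun k _ => wav_abs_le hψ_bdd l k x)
  _ = (2*(A:ℝ)+1) * ((2:ℝ) ^ ((l:ℝ)/2) * Φ₀) := by
        rw [ht, wav_card, nsmul_eq_mul]; push_cast; ring

noncomputable def wavSum (ψ : ℝ → ℝ) (A l : ℕ) (x : ℝ) : ℝ :=
  ∑ j ∈ Finset.Icc (-(A:ℤ)) (A:ℤ), waveletDil ψ l (⌊(2:ℝ)^l * x⌋ + j) x

lemma wavSum_meas (hψ : Measurable ψ) (A l : ℕ) : Measurable (wavSum ψ A l) := by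
  apply Finset.measurable_sum
  intro j _
  have hy : Measurable fun x : ℝ => (2:ℝ)^l * x := measurable_id.const_mul _
  have hfl : Measurable fun x : ℝ => ((⌊(2:ℝ)^l * x⌋ + j : ℤ) : ℝ) :=
    measurable_from_top.comp ((Int.measurable_floor.comp hy).add_const j)
  unfold waveletDil
  exact (hψ.comp (hy.sub hfl)).const_mul _

lemma tsum_wav_eq (hψ_supp : ∀ y : ℝ, y ∉ Set.Icc (-(A : ℝ)) (A : ℝ) → ψ y = 0)
    (l : ℕ) (x : ℝ) :
    ∑' k : ℤ, waveletDil ψ l k x = wavSum ψ A l x := by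
  rw [tsum_eq_sum (s := Finset.Icc (⌊(2:ℝ)^l * x⌋ - (A:ℤ)) (⌊(2:ℝ)^l * x⌋ + (A:ℤ)))
    (fun k hk => wav_eq_zero hψ_supp hk)]
  have hmap : Finset.Icc (⌊(2:ℝ)^l * x⌋ - (A:ℤ)) (⌊(2:ℝ)^l * x⌋ + (A:ℤ))
      = Finset.map (addLeftEmbedding ⌊(2:ℝ)^l * x⌋) (Finset.Icc (-(A:ℤ)) (A:ℤ)) := by
    rw [Finset.map_add_left_Icc, sub_eq_add_neg]
  rw [hmap, Finset.sum_map]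
  rfl

lemma wavSum_abs_le (hψ_supp : ∀ y : ℝ, y ∉ Set.Icc (-(A : ℝ)) (A : ℝ) → ψ y = 0)
    (hψ_bdd : ∀ y : ℝ, |ψ y| ≤ Φ₀) (hΦ₀ : 0 ≤ Φ₀) (l : ℕ) (x : ℝ) :
    |wavSum ψ A l x| ≤ (2*(A:ℝ)+1) * ((2:ℝ) ^ ((l:ℝ)/2) * Φ₀) := by
  rw [← tsum_wav_eq hψ_supp l x,
    tsum_eq_sum (s := Finset.Icc (⌊(2:ℝ)^l * x⌋ - (A:ℤ)) (⌊(2:ℝ)^l * x⌋ + (A:ℤ)))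
      (fun k hk => wav_eq_zero hψ_supp hk)]
  exact le_trans (Finset.abs_sum_le_sum_abs _ _) (wav_sum_abs_le hψ_supp hψ_bdd hΦ₀ l x _)

lemma wav_summable (hψ_supp : ∀ y : ℝ, y ∉ Set.Icc (-(A : ℝ)) (A : ℝ) → ψ y = 0)
    (l : ℕ) (x : ℝ) : Summable fun k : ℤ => waveletDil ψ l k x :=
  summable_of_ne_finset_zero (s := Finset.Icc (⌊(2:ℝ)^l * x⌋ - (A:ℤ)) (⌊(2:ℝ)^l * x⌋ + (A:ℤ)))
    (fun k hk => wav_eq_zero hψ_supp hk)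

end wav

section wav2
variable {ψ : ℝ → ℝ} {A : ℕ} {Φ₀ : ℝ}
lemma wav_e_abs_summable (hψ_meas : Measurable ψ)
    (hψ_supp : ∀ y : ℝ, y ∉ Set.Icc (-(A : ℝ)) (A : ℝ) → ψ y = 0)
    (hψ_bdd : ∀ y : ℝ, |ψ y| ≤ Φ₀) (hΦ₀ : 0 ≤ Φ₀)
    (μ : Measure ℝ) [IsProbabilityMeasure μ] (l : ℕ) :
    Summable fun k : ℤ => |∫ x, waveletDil ψ l k x ∂μ| := by
  have hwint : ∀ k : ℤ, Integrable (waveletDil ψ l k) μ := fun k =>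
    integrable_of_bounded' (wav_meas hψ_meas l k) (wav_abs_le hψ_bdd l k)
  refine summable_of_sum_le (c := (2*(A:ℝ)+1) * ((2:ℝ) ^ ((l:ℝ)/2) * Φ₀))
    (fun k => abs_nonneg _) (fun s => ?_)
  calc ∑ k ∈ s, |∫ x, waveletDil ψ l k x ∂μ|
      ≤ ∑ k ∈ s, ∫ x, |waveletDil ψ l k x| ∂μ := by
        refine Finset.sum_le_sum fun k _ => ?_
        simpa [Real.norm_eq_abs] using
          norm_integral_le_integral_norm (f := waveletDil ψ l k) (μ := μ)
  _ = ∫ x, ∑ k ∈ s, |waveletDil ψ l k x| ∂μ :=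
        (integral_finset_sum s fun k _ => (hwint k).abs).symm
  _ ≤ ∫ _x, (2*(A:ℝ)+1) * ((2:ℝ) ^ ((l:ℝ)/2) * Φ₀) ∂μ := by
        refine integral_mono (integrable_finset_sum s fun k _ => (hwint k).abs)
          (integrable_const _) (fun x => wav_sum_abs_le hψ_supp hψ_bdd hΦ₀ l x s)
  _ = (2*(A:ℝ)+1) * ((2:ℝ) ^ ((l:ℝ)/2) * Φ₀) := by simp

lemma tsum_integral_wav_eq (hψ_meas : Measurable ψ)
    (hψ_supp : ∀ y : ℝ, y ∉ Set.Icc (-(A : ℝ)) (A : ℝ) → ψ y = 0)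
    (hψ_bdd : ∀ y : ℝ, |ψ y| ≤ Φ₀) (hΦ₀ : 0 ≤ Φ₀)
    (μ : Measure ℝ) [IsProbabilityMeasure μ] (l : ℕ) :
    ∑' k : ℤ, ∫ x, waveletDil ψ l k x ∂μ = ∫ x, wavSum ψ A l x ∂μ := by
  have hlint : ∑' k : ℤ, ∫⁻ x, ‖waveletDil ψ l k x‖₊ ∂μ ≠ ⊤ := by
    rw [← lintegral_tsum (fun k => ((wav_meas hψ_meas l k).nnnorm.coe_nnreal_ennreal).aemeasurable)]
    have hb : ∀ x : ℝ, ∑' k : ℤ, (‖waveletDil ψ l k x‖₊ : ℝ≥0∞)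
        ≤ ENNReal.ofReal ((2*(A:ℝ)+1) * ((2:ℝ) ^ ((l:ℝ)/2) * Φ₀)) := by
      intro x
      rw [tsum_eq_sum (s := Finset.Icc (⌊(2:ℝ)^l * x⌋ - (A:ℤ)) (⌊(2:ℝ)^l * x⌋ + (A:ℤ)))
        (fun k hk => by rw [wav_eq_zero hψ_supp hk]; simp)]
      calc ∑ k ∈ Finset.Icc (⌊(2:ℝ)^l * x⌋ - (A:ℤ)) (⌊(2:ℝ)^l * x⌋ + (A:ℤ)),
            (‖waveletDil ψ l k x‖₊ : ℝ≥0∞)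
          ≤ (Finset.Icc (⌊(2:ℝ)^l * x⌋ - (A:ℤ)) (⌊(2:ℝ)^l * x⌋ + (A:ℤ))).card
            • ENNReal.ofReal ((2:ℝ) ^ ((l:ℝ)/2) * Φ₀) := by
            refine Finset.sum_le_card_nsmul _ _ _ (fun k _ => ?_)
            rw [← enorm_eq_nnnorm, ← ofReal_norm_eq_enorm]
            exact ENNReal.ofReal_le_ofReal (by simpa [Real.norm_eq_abs] using wav_abs_le hψ_bdd l k x)
      _ = ENNReal.ofReal ((2*(A:ℝ)+1) * ((2:ℝ) ^ ((l:ℝ)/2) * Φ₀)) := by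
            rw [wav_card (A := A), nsmul_eq_mul]
            rw [← ENNReal.ofReal_natCast, ← ENNReal.ofReal_mul (by positivity)]
            congr 1
            push_cast; ring
    refine ne_top_of_le_ne_top ?_ (lintegral_mono hb)
    rw [lintegral_const]
    simp [measure_univ]
  rw [← integral_tsum (fun k => (wav_meas hψ_meas l k).aestronglyMeasurable) hlint]
  exact integral_congr_ae (Filter.Eventually.of_forall fun x => tsum_wav_eq hψ_supp l x)
end wav2


lemma arith_main {p c₁ c₂ L B Sg u M T nr : ℝ}
    (hp : 1 ≤ p) (hL : 0 < L) (hLn : L ≤ nr) (hnr : 1 ≤ nr)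
    (hB : 0 < B) (hSg : 0 < Sg) (hsq : 16 * p ^ 2 ≤ c₁ ^ 2 * c₂)
    (hs2Sg : (Real.sqrt 2 - 1) * Sg = u - 1)
    (hu : Real.sqrt 2 ≤ u)
    (hM : M = 2 * B * Sg)
    (hT : 0 < T) (hT2 : nr * T ^ 2 = c₁ ^ 2 * c₂ * L * B ^ 2 * u ^ 4) :
    ∃ lam : ℝ, 0 ≤ lam ∧ lam * M ≤ 1 ∧
      -lam * (nr * T) + nr * (lam ^ 2 * M ^ 2) ≤ -(p * L) := by
  set s2 := Real.sqrt 2 with hs2def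
  have hs2sq : s2 ^ 2 = 2 := Real.sq_sqrt (by norm_num)
  have hs2nn : 0 ≤ s2 := Real.sqrt_nonneg 2
  have hs2lb : 1.41 ≤ s2 := by nlinarith
  have hs2ub : s2 ≤ 1.45 := by nlinarith
  have hu1 : 1 < u := by linarith
  have hMpos : 0 < M := by rw [hM]; positivity
  have h' : ((s2 - 1) * Sg) ^ 2 = (u - 1) ^ 2 := by rw [hs2Sg]
  have key1 : Sg ^ 2 * (3 - 2 * s2) = (u - 1) ^ 2 := by
    linear_combination h' - Sg ^ 2 * hs2sq
  have h1 : 4 * (u - 1) ≤ u ^ 2 := by nlinarith [sq_nonneg (u - 2)]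
  have key2 : 16 * (u - 1) ^ 2 ≤ u ^ 4 := by
    nlinarith [mul_le_mul h1 h1 (by linarith) (sq_nonneg u)]
  have h3 : (1 : ℝ) / 10 ≤ 3 - 2 * s2 := by linarith
  have k1 : 16 * Sg ^ 2 ≤ 10 * u ^ 4 := by nlinarith [sq_nonneg Sg]
  have key3 : 16 * p * Sg ^ 2 ≤ c₁ ^ 2 * c₂ * u ^ 4 := by
    have e1 : p * (16 * Sg ^ 2) ≤ p * (10 * u ^ 4) :=
      mul_le_mul_of_nonneg_left k1 (by linarith)
    have e2 : 0 ≤ (c₁ ^ 2 * c₂ - 16 * p ^ 2) * u ^ 4 :=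
      mul_nonneg (by linarith) (by positivity)
    have hu4 : 0 < u ^ 4 := by positivity
    have e3 : 10 * p ≤ 16 * p ^ 2 := by
      nlinarith [mul_nonneg (by linarith : (0:ℝ) ≤ p) (by linarith : (0:ℝ) ≤ p - 1)]
    have e4 := mul_le_mul_of_nonneg_right e3 hu4.le
    linarith [e1, e2, e4]
  have hu4 : 0 < u ^ 4 := by positivity
  by_cases hcase : T ≤ 2 * M
  · refine ⟨T / (2 * M ^ 2), by positivity, ?_, ?_⟩
    · rw [div_mul_eq_mul_div, div_le_one (by positivity)]
      nlinarith
    · have hexp : -(T / (2 * M ^ 2)) * (nr * T) + nr * ((T / (2 * M ^ 2)) ^ 2 * M ^ 2)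
          = -(nr * T ^ 2) / (4 * M ^ 2) := by
        field_simp
        ring
      rw [hexp, neg_div, neg_le_neg_iff, le_div_iff₀ (by positivity)]
      rw [hT2, hM]
      have h5 : 0 ≤ L * B ^ 2 := by positivity
      linarith [mul_le_mul_of_nonneg_left key3 h5]
  · push_neg at hcase
    refine ⟨1 / M, by positivity, by rw [one_div_mul_cancel hMpos.ne'], ?_⟩
    have hexp : -(1 / M) * (nr * T) + nr * ((1 / M) ^ 2 * M ^ 2) = -(nr * T) / M + nr := by
      field_simp
    rw [hexp]
    have hSgu : Sg ^ 2 ≤ u ^ 4 := by linarith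
    have hsq2 : (2 * p * L * M) ^ 2 ≤ (nr * T) ^ 2 := by
      have e1 : (nr * T) ^ 2 = nr * (c₁ ^ 2 * c₂ * L * B ^ 2 * u ^ 4) := by
        rw [← hT2]; ring
      have e2 : (2 * p * L * M) ^ 2 = 16 * p ^ 2 * L ^ 2 * B ^ 2 * Sg ^ 2 := by
        rw [hM]; ring
      rw [e1, e2]
      have s1 : 16 * p ^ 2 * L ^ 2 * B ^ 2 * Sg ^ 2 ≤ 16 * p ^ 2 * L * nr * B ^ 2 * u ^ 4 := by
        have : L * Sg ^ 2 ≤ nr * u ^ 4 :=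
          le_trans (mul_le_mul_of_nonneg_left hSgu hL.le)
            (mul_le_mul_of_nonneg_right hLn hu4.le)
        linarith [mul_le_mul_of_nonneg_left this
          (by positivity : (0:ℝ) ≤ 16 * p ^ 2 * L * B ^ 2)]
      have s2' : 16 * p ^ 2 * L * nr * B ^ 2 * u ^ 4 ≤ nr * (c₁ ^ 2 * c₂ * L * B ^ 2 * u ^ 4) := by
        linarith [mul_le_mul_of_nonneg_right hsq
          (by positivity : (0:ℝ) ≤ L * nr * B ^ 2 * u ^ 4)]
      linarith
    have hpos1 : 0 ≤ 2 * p * L * M := by positivity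
    have hpos2 : 0 ≤ nr * T := by positivity
    have h2pT : 2 * p * L * M ≤ nr * T := by
      have := Real.sqrt_le_sqrt hsq2
      rwa [Real.sqrt_sq hpos1, Real.sqrt_sq hpos2] at this
    have hn2M : nr * (2 * M) ≤ nr * T := by
      exact mul_le_mul_of_nonneg_left hcase.le (by linarith)
    have hfin : p * L + nr ≤ nr * T / M := by
      rw [le_div_iff₀ hMpos]
      linarith [h2pT, hn2M]
    rw [neg_div]
    linarith

/-- Concentration of the empirical detail-coefficient process.
`ψ` is a measurable function vanishing outside `[-A, A]` with `‖ψ‖_∞ ≤ Φ₀`,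
`ψ_{ℓ,k}(x) = 2^{ℓ/2} ψ(2^ℓ x − k)`, and `X₁, …, X_n` are i.i.d. with common density
`f ∈ L²(ℝ)`.  For `p ≥ 1`, `c₂ > 0`, `c₁ √c₂ ≥ 4p` and `1 ≤ N ≤ n / log(n)`, the
probability that
`|n⁻¹ ∑_{i=1}^n ∑_{ℓ=0}^{N−1} ∑_{k∈ℤ} (ψ_{ℓ,k}(X_i) − E[ψ_{ℓ,k}(X_i)])| > c₁ √(V_{2,ψ}(n,N))`
is at most `2 n^{-p}`, where `V_{2,ψ}(n,N) = c₂ log(n) (2A+1)² Φ₀² 4^N / n`. -/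
theorem stmt_6 {Ω : Type*} [MeasurableSpace Ω] (P : Measure Ω) [IsProbabilityMeasure P]
    (A : ℕ) (hA : 0 < A) (Φ₀ : ℝ) (hΦ₀ : 0 < Φ₀)
    (ψ : ℝ → ℝ) (hψ_meas : Measurable ψ)
    (hψ_supp : ∀ y : ℝ, y ∉ Set.Icc (-(A : ℝ)) (A : ℝ) → ψ y = 0)
    (hψ_bdd : ∀ y : ℝ, |ψ y| ≤ Φ₀)
    (n : ℕ) (hn : 1 ≤ n)
    (X : Fin n → Ω → ℝ) (hX_meas : ∀ i, Measurable (X i))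
    (hX_indep : iIndepFun X P)
    (f : ℝ → ℝ) (hf_meas : Measurable f) (hf_L2 : MemLp f 2 volume)
    (hX_law : ∀ i, P.map (X i) = volume.withDensity fun x => ENNReal.ofReal (f x))
    (p c₁ c₂ : ℝ) (hp : 1 ≤ p) (hc₂ : 0 < c₂) (hc₁ : 4 * p ≤ c₁ * Real.sqrt c₂)
    (N : ℕ) (hN : 1 ≤ N) (hNn : (N : ℝ) ≤ (n : ℝ) / Real.log n) :
    (P {ω | c₁ * Real.sqrt (c₂ * Real.log n * (2 * (A : ℝ) + 1) ^ 2 * Φ₀ ^ 2 * 4 ^ N / n) <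
        |(n : ℝ)⁻¹ * ∑ i : Fin n, ∑ l ∈ Finset.range N,
          ∑' k : ℤ, (waveletDil ψ l k (X i ω) - ∫ ω', waveletDil ψ l k (X i ω') ∂P)|}).toReal ≤
      2 * (n : ℝ) ^ (-p) := by
  -- basic numeric facts
  have hn2 : 2 ≤ n := by
    by_contra h
    have hn1 : n = 1 := by omega
    subst hn1
    rw [Nat.cast_one, Real.log_one, div_zero] at hNn
    have h1 : (1:ℝ) ≤ (N:ℝ) := by exact_mod_cast hN
    linarith
  have npos : (0:ℝ) < n := by positivity
  have hnR1 : (1:ℝ) ≤ (n:ℝ) := by exact_mod_cast hn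
  set L := Real.log n with hLdef
  have hL : 0 < L := Real.log_pos (by exact_mod_cast hn2)
  have hLn : L ≤ (n:ℝ) := by
    have := Real.log_le_sub_one_of_pos npos
    linarith
  have hc₁pos : 0 < c₁ := by nlinarith [Real.sqrt_pos.mpr hc₂, hp]
  have hsq : 16 * p ^ 2 ≤ c₁ ^ 2 * c₂ := by
    have h8 : (0:ℝ) ≤ 8 * p := by linarith
    nlinarith [mul_self_nonneg (c₁ * Real.sqrt c₂ - 4 * p), Real.sq_sqrt hc₂.le,
      mul_le_mul_of_nonneg_left hc₁ h8]
  -- sqrt-2 facts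
  have hs2sq : Real.sqrt 2 ^ 2 = 2 := Real.sq_sqrt (by norm_num)
  have hs2nn : 0 ≤ Real.sqrt 2 := Real.sqrt_nonneg 2
  have hs21 : 1 < Real.sqrt 2 := by nlinarith
  have hr : ∀ l : ℕ, (2:ℝ) ^ ((l:ℝ)/2) = Real.sqrt 2 ^ l := by
    intro l
    rw [Real.sqrt_eq_rpow, ← Real.rpow_natCast ((2:ℝ) ^ ((1:ℝ)/2)) l,
      ← Real.rpow_mul (by norm_num : (0:ℝ) ≤ 2)]
    congr 1
    ring
  set u := Real.sqrt 2 ^ N with hudef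
  have hu : Real.sqrt 2 ≤ u := le_self_pow₀ hs21.le (by omega)
  have h24 : Real.sqrt 2 ^ 4 = 4 := by
    calc Real.sqrt 2 ^ 4 = (Real.sqrt 2 ^ 2) ^ 2 := by ring
    _ = 4 := by rw [hs2sq]; norm_num
  have h4N : (4:ℝ) ^ N = u ^ 4 := by
    rw [hudef, ← h24, ← pow_mul, mul_comm, pow_mul]
  set Sg := ∑ l ∈ Finset.range N, Real.sqrt 2 ^ l with hSgdef
  have hSgpos : 0 < Sg :=
    Finset.sum_pos (fun l _ => pow_pos (by linarith) l) (Finset.nonempty_range_iff.mpr (by omega))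
  have hs2Sg : (Real.sqrt 2 - 1) * Sg = u - 1 := by
    rw [hSgdef, geom_sum_eq (by intro h; rw [h] at hs21; linarith : Real.sqrt 2 ≠ 1) N, hudef]
    rw [mul_comm, div_mul_cancel₀ _ (by intro h; rw [sub_eq_zero] at h; rw [← h] at hs21; linarith : Real.sqrt 2 - 1 ≠ 0)]
  set B := (2*(A:ℝ)+1) * Φ₀ with hBdef
  have hBpos : 0 < B := by positivity
  set M := 2 * B * Sg with hMdef
  have hMpos : 0 < M := by positivity
  -- the measure μ
  set μ := volume.withDensity fun x => ENNReal.ofReal (f x) with hμdef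
  have hμprob : IsProbabilityMeasure μ := by
    have h := Measure.isProbabilityMeasure_map (μ := P) (hX_meas ⟨0, by omega⟩).aemeasurable
    rwa [hX_law ⟨0, by omega⟩] at h
  -- expectations
  set e : ℕ → ℤ → ℝ := fun l k => ∫ x, waveletDil ψ l k x ∂μ with hedef
  have hew : ∀ (i : Fin n) (l : ℕ) (k : ℤ),
      ∫ ω', waveletDil ψ l k (X i ω') ∂P = e l k := by
    intro i l k
    show ∫ ω', waveletDil ψ l k (X i ω') ∂P = ∫ x, waveletDil ψ l k x ∂μ
    rw [← hX_law i]
    exact (integral_map (hX_meas i).aemeasurable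
      (wav_meas hψ_meas l k).aestronglyMeasurable).symm
  have hesum : ∀ l, Summable (e l) := fun l =>
    Summable.of_abs (wav_e_abs_summable hψ_meas hψ_supp hψ_bdd hΦ₀.le μ l)
  set c : ℕ → ℝ := fun l => ∑' k : ℤ, e l k with hcdef
  have hc : ∀ l, c l = ∫ x, wavSum ψ A l x ∂μ := fun l =>
    tsum_integral_wav_eq hψ_meas hψ_supp hψ_bdd hΦ₀.le μ l
  -- the centered sum function
  set G : ℝ → ℝ := fun x => ∑ l ∈ Finset.range N, wavSum ψ A l x with hGdef
  set Cb : ℝ := ∑ l ∈ Finset.range N, c l with hCbdef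
  set φ : ℝ → ℝ := fun x => G x - Cb with hφdef
  have hGmeas : Measurable G := Finset.measurable_sum _ fun l _ => wavSum_meas hψ_meas A l
  have hφmeas : Measurable φ := hGmeas.sub_const _
  have hterm : ∀ l : ℕ, (2*(A:ℝ)+1) * ((2:ℝ) ^ ((l:ℝ)/2) * Φ₀) = B * Real.sqrt 2 ^ l := by
    intro l
    rw [hr l, hBdef]
    ring
  have hGbdd : ∀ x, |G x| ≤ B * Sg := by
    intro x
    calc |G x| ≤ ∑ l ∈ Finset.range N, |wavSum ψ A l x| := Finset.abs_sum_le_sum_abs _ _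
    _ ≤ ∑ l ∈ Finset.range N, B * Real.sqrt 2 ^ l := by
        refine Finset.sum_le_sum fun l _ => ?_
        rw [← hterm l]
        exact wavSum_abs_le hψ_supp hψ_bdd hΦ₀.le l x
    _ = B * Sg := by rw [hSgdef, Finset.mul_sum]
  have hcl_bdd : ∀ l : ℕ, |c l| ≤ B * Real.sqrt 2 ^ l := by
    intro l
    rw [hc l, ← hterm l]
    have h := norm_integral_le_of_norm_le_const (μ := μ) (f := wavSum ψ A l)
      (C := (2*(A:ℝ)+1) * ((2:ℝ) ^ ((l:ℝ)/2) * Φ₀))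
      (Filter.Eventually.of_forall fun x => by
        simpa [Real.norm_eq_abs] using wavSum_abs_le hψ_supp hψ_bdd hΦ₀.le l x)
    simpa [Real.norm_eq_abs, measure_univ] using h
  have hCbbdd : |Cb| ≤ B * Sg := by
    calc |Cb| ≤ ∑ l ∈ Finset.range N, |c l| := Finset.abs_sum_le_sum_abs _ _
    _ ≤ ∑ l ∈ Finset.range N, B * Real.sqrt 2 ^ l := Finset.sum_le_sum fun l _ => hcl_bdd l
    _ = B * Sg := by rw [hSgdef, Finset.mul_sum]
  have hφbdd : ∀ x, |φ x| ≤ M := by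
    intro x
    rw [hφdef, hMdef]
    calc |G x - Cb| ≤ |G x| + |Cb| := abs_sub _ _
    _ ≤ 2 * B * Sg := by have := hGbdd x; linarith
  have hGint : Integrable G μ := integrable_of_bounded' hGmeas hGbdd
  have hφmean : ∫ x, φ x ∂μ = 0 := by
    have hGI : ∫ x, G x ∂μ = Cb := by
      rw [hGdef, hCbdef]
      rw [integral_finset_sum _ (fun l _ => integrable_of_bounded'
        (wavSum_meas hψ_meas A l) (fun x => wavSum_abs_le hψ_supp hψ_bdd hΦ₀.le l x))]
      exact Finset.sum_congr rfl fun l _ => (hc l).symm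
    rw [hφdef]
    rw [integral_sub hGint (integrable_const _), hGI, integral_const]
    simp [measure_univ]
  -- the iid variables
  set W : Fin n → Ω → ℝ := fun i => φ ∘ X i with hWdef
  have hWind : iIndepFun W P :=
    hX_indep.comp (fun _ => φ) (fun _ => hφmeas)
  have hWmeas : ∀ i, Measurable (W i) := fun i => hφmeas.comp (hX_meas i)
  have hWbdd : ∀ i ω, |W i ω| ≤ M := fun i ω => hφbdd (X i ω)
  have hWmean : ∀ i, ∫ ω, W i ω ∂P = 0 := by
    intro i
    have h := integral_map (μ := P) (hX_meas i).aemeasurable hφmeas.aestronglyMeasurable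
    rw [hWdef]
    simp only [Function.comp_apply]
    rw [← h, hX_law i]
    exact hφmean
  -- rewrite of the summands
  have hev : ∀ (ω : Ω) (i : Fin n), (∑ l ∈ Finset.range N, ∑' (k : ℤ),
      (waveletDil ψ l k (X i ω) - ∫ ω', waveletDil ψ l k (X i ω') ∂P)) = W i ω := by
    intro ω i
    have h1 : ∀ l : ℕ, ∑' (k : ℤ),
        (waveletDil ψ l k (X i ω) - ∫ ω', waveletDil ψ l k (X i ω') ∂P)
        = wavSum ψ A l (X i ω) - c l := by
      intro l
      have h2 : ∀ k : ℤ, (waveletDil ψ l k (X i ω) - ∫ ω', waveletDil ψ l k (X i ω') ∂P)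
          = waveletDil ψ l k (X i ω) - e l k := fun k => by rw [hew i l k]
      rw [tsum_congr h2, Summable.tsum_sub (wav_summable hψ_supp l _) (hesum l),
        tsum_wav_eq hψ_supp l _, hcdef]
    rw [Finset.sum_congr rfl (fun l _ => h1 l), Finset.sum_sub_distrib]
    rfl
  -- threshold
  set D := c₂ * L * (2 * (A : ℝ) + 1) ^ 2 * Φ₀ ^ 2 * 4 ^ N / n with hDdef
  have hD : 0 < D := by
    rw [hDdef]
    exact div_pos (by positivity) npos
  set T := c₁ * Real.sqrt D with hTdef
  have hTpos : 0 < T := mul_pos hc₁pos (Real.sqrt_pos.mpr hD)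
  have hT2 : (n:ℝ) * T ^ 2 = c₁ ^ 2 * c₂ * L * B ^ 2 * u ^ 4 := by
    rw [hTdef, mul_pow, Real.sq_sqrt hD.le, hDdef, hBdef, ← h4N]
    field_simp
  -- choose lambda
  obtain ⟨lam, hlam0, hlamM, hexp⟩ :=
    arith_main hp hL hLn hnR1 hBpos hSgpos hsq hs2Sg hu hMdef hTpos hT2
  -- event inclusion
  have hsub : {ω | T < |(n : ℝ)⁻¹ * ∑ i : Fin n, ∑ l ∈ Finset.range N,
        ∑' k : ℤ, (waveletDil ψ l k (X i ω) - ∫ ω', waveletDil ψ l k (X i ω') ∂P)|}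
      ⊆ {ω | (n:ℝ) * T ≤ |∑ i, W i ω|} := by
    intro ω hω
    simp only [Set.mem_setOf_eq] at hω ⊢
    rw [Finset.sum_congr rfl (fun i _ => hev ω i)] at hω
    rw [abs_mul, abs_inv, Nat.abs_cast, inv_mul_eq_div, lt_div_iff₀ npos] at hω
    linarith
  -- conclusion
  have hcher := chernoff_two_sided P hWind hWmeas hMpos.le hWbdd hWmean hlam0 hlamM ((n:ℝ) * T)
  have hnp : 2 * (n:ℝ) ^ (-p) = 2 * Real.exp (-(p * L)) := by
    rw [Real.rpow_def_of_pos npos]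
    congr 1
    rw [hLdef]
    ring
  calc (P {ω | T < |(n : ℝ)⁻¹ * ∑ i : Fin n, ∑ l ∈ Finset.range N,
        ∑' k : ℤ, (waveletDil ψ l k (X i ω) - ∫ ω', waveletDil ψ l k (X i ω') ∂P)|}).toReal
      ≤ (P {ω | (n:ℝ) * T ≤ |∑ i, W i ω|}).toReal :=
        ENNReal.toReal_mono (measure_ne_top _ _) (measure_mono hsub)
  _ ≤ 2 * Real.exp (-lam * ((n:ℝ) * T) + n * (lam ^ 2 * M ^ 2)) := hcher
  _ ≤ 2 * Real.exp (-(p * L)) := by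
      have := Real.exp_le_exp.mpr hexp
      linarith
  _ = 2 * (n:ℝ) ^ (-p) := hnp.symm
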